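/- Let w : ℝ → ℝ be a twice differentiable concave function achieving its maximum at x* ∈ ℝ, and suppose w''(x) ≤ −K' for all x, where K' > 0. Assume e^{w} is integrable. Then K' · ∫ (x − x*)² e^{w(x)} dx ≤ ∫ e^{w(x)} dx. -/

import Mathlib

open MeasureTheory Filter Topology

theorem log_concave_fluctuation_bound (w w' w'' : ℝ → ℝ) (xstar K' : ℝ)
    (hK' : 0 < K')
    (hw : ∀ x, HasDerivAt w (w' x) x)
    (hw' : ∀ x, HasDerivAt w' (w'' x) x)
    (hconc : ConcaveOn ℝ Set.univ w)
    (hmax : IsMaxOn w Set.univ xstar)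
    (hcurv : ∀ x, w'' x ≤ -K')
    (hint : Integrable (fun x => Real.exp (w x))) :
    K' * ∫ x, (x - xstar) ^ 2 * Real.exp (w x) ≤ ∫ x, Real.exp (w x) := by
  set f : ℝ → ℝ := fun x => Real.exp (w x) with hf
  set q : ℝ → ℝ := fun x => (x - xstar) ^ 2 * f x with hq
  have hfpos : ∀ x, 0 < f x := fun x => Real.exp_pos _
  -- continuity
  have hwc : Continuous w := continuous_iff_continuousAt.mpr fun x => (hw x).continuousAt
  have hw'c : Continuous w' := continuous_iff_continuousAt.mpr fun x => (hw' x).continuousAt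
  have hfc : Continuous f := Real.continuous_exp.comp hwc
  have hqc : Continuous q := (continuous_id.sub continuous_const).pow 2 |>.mul hfc
  -- derivative at max is 0
  have hw0 : w' xstar = 0 :=
    (hmax.isLocalMax Filter.univ_mem).hasDerivAt_eq_zero (hw xstar)
  -- w' x + K' x is antitone
  have hanti : Antitone (fun x => w' x + K' * x) := by
    have hd : ∀ x, HasDerivAt (fun x => w' x + K' * x) (w'' x + K') x := by
      intro x
      have := (hw' x).fun_add ((hasDerivAt_id x).const_mul K')
      simpa using this
    refine antitone_of_deriv_nonpos (fun x => (hd x).differentiableAt) fun x => ?_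
    rw [(hd x).deriv]
    linarith [hcurv x]
  -- key pointwise inequality
  have hkey : ∀ x, K' * (x - xstar) ^ 2 ≤ (x - xstar) * (-(w' x)) := by
    intro x
    rcases le_total xstar x with hx | hx
    · have := hanti hx
      simp only [hw0] at this
      have hx' : w' x ≤ -(K' * (x - xstar)) := by linarith
      nlinarith [sub_nonneg.mpr hx]
    · have := hanti hx
      simp only [hw0] at this
      have hx' : K' * (xstar - x) ≤ w' x := by linarith
      nlinarith [sub_nonneg.mpr hx]
  -- FTC function g
  set g : ℝ → ℝ := fun x => (x - xstar) * f x with hg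
  have hgd : ∀ x, HasDerivAt g (f x + (x - xstar) * (f x * w' x)) x := by
    intro x
    have h1 : HasDerivAt (fun x => x - xstar) 1 x := (hasDerivAt_id x).sub_const xstar
    have h2 : HasDerivAt f (f x * w' x) x := (hw x).exp
    have := h1.fun_mul h2
    simpa [hg] using this
  set gd : ℝ → ℝ := fun x => f x + (x - xstar) * (f x * w' x) with hgdd
  have hgdc : Continuous gd :=
    hfc.add (((continuous_id.sub continuous_const)).mul (hfc.mul hw'c))
  -- pointwise : K' * q ≤ f - gd
  have hkey2 : ∀ x, K' * q x ≤ f x - gd x := by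
    intro x
    have h1 := hkey x
    have h2 := (hfpos x).le
    have : K' * (x - xstar) ^ 2 * f x ≤ (x - xstar) * (-(w' x)) * f x :=
      mul_le_mul_of_nonneg_right h1 h2
    simp only [hq, hgdd]
    nlinarith [this]
  have hqnn : ∀ x, 0 ≤ q x := fun x => mul_nonneg (sq_nonneg _) (hfpos x).le
  -- bound on interval integrals of q
  have hbound : ∀ n : ℕ, (∫ x in (xstar - n)..(xstar + n), K' * q x) ≤ ∫ x, f x := by
    intro n
    have hab : xstar - (n : ℝ) ≤ xstar + n := by
      have : (0:ℝ) ≤ n := n.cast_nonneg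
      linarith
    have hIq : IntervalIntegrable (fun x => K' * q x) volume (xstar - n) (xstar + n) :=
      (continuous_const.mul hqc).intervalIntegrable _ _
    have hIf : IntervalIntegrable f volume (xstar - n) (xstar + n) :=
      hfc.intervalIntegrable _ _
    have hIgd : IntervalIntegrable gd volume (xstar - n) (xstar + n) :=
      hgdc.intervalIntegrable _ _
    have hmono : (∫ x in (xstar - n)..(xstar + n), K' * q x)
        ≤ ∫ x in (xstar - n)..(xstar + n), (f x - gd x) := by
      apply intervalIntegral.integral_mono_on hab hIq (hIf.sub hIgd)
      intro x _
      exact hkey2 x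
    have hftc : (∫ x in (xstar - n)..(xstar + n), gd x)
        = g (xstar + n) - g (xstar - n) :=
      intervalIntegral.integral_eq_sub_of_hasDerivAt (fun x _ => hgd x) hIgd
    have hsub : (∫ x in (xstar - n)..(xstar + n), (f x - gd x))
        = (∫ x in (xstar - n)..(xstar + n), f x) - (g (xstar + n) - g (xstar - n)) := by
      rw [intervalIntegral.integral_sub hIf hIgd, hftc]
    have hgb : 0 ≤ g (xstar + n) := by
      have : (0:ℝ) ≤ (xstar + n) - xstar := by
        have : (0:ℝ) ≤ n := n.cast_nonneg
        linarith
      exact mul_nonneg this (hfpos _).le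
    have hga : g (xstar - n) ≤ 0 := by
      have h1 : (xstar - n) - xstar ≤ 0 := by
        have : (0:ℝ) ≤ n := n.cast_nonneg
        linarith
      exact mul_nonpos_of_nonpos_of_nonneg h1 (hfpos _).le
    have hsetle : (∫ x in (xstar - n)..(xstar + n), f x) ≤ ∫ x, f x := by
      rw [intervalIntegral.integral_of_le hab]
      exact setIntegral_le_integral hint (Filter.Eventually.of_forall fun x => (hfpos x).le)
    linarith [hmono, hsub ▸ hmono]
  -- limits of endpoints
  have hta : Tendsto (fun n : ℕ => xstar - (n : ℝ)) atTop atBot := by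
    apply tendsto_atBot_add_const_left
    exact tendsto_neg_atBot_iff.mpr tendsto_natCast_atTop_atTop
  have htb : Tendsto (fun n : ℕ => xstar + (n : ℝ)) atTop atTop :=
    tendsto_atTop_add_const_left _ _ tendsto_natCast_atTop_atTop
  -- q is integrable
  have hqint : Integrable q := by
    apply integrable_of_intervalIntegral_norm_bounded ((∫ x, f x) / K')
      (fun n : ℕ => (hqc.intervalIntegrable _ _).1) hta htb
    filter_upwards with n
    have h1 := hbound n
    rw [intervalIntegral.integral_const_mul] at h1
    have h2 : (∫ x in (xstar - n)..(xstar + n), ‖q x‖)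
        = ∫ x in (xstar - n)..(xstar + n), q x := by
      congr 1
      ext x
      exact Real.norm_of_nonneg (hqnn x)
    rw [h2]
    rw [le_div_iff₀ hK', mul_comm]
    exact h1
  -- take limit
  have hlim : Tendsto (fun n : ℕ => ∫ x in (xstar - n)..(xstar + n), q x) atTop
      (𝓝 (∫ x, q x)) := intervalIntegral_tendsto_integral hqint hta htb
  have hlim' : Tendsto (fun n : ℕ => K' * ∫ x in (xstar - n)..(xstar + n), q x) atTop
      (𝓝 (K' * ∫ x, q x)) := hlim.const_mul K'
  refine le_of_tendsto hlim' ?_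
  filter_upwards with n
  have h1 := hbound n
  rw [intervalIntegral.integral_const_mul] at h1
  exact h1
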